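/- arXiv:2006.12169 — 2 statements merged into one kernel-verified Lean document; each statement's English description precedes it below -/
import Mathlib

section
/- Let φ : ℝ → ℝ be differentiable. Then φ is Gaussian–Poincaré normalized (i.e., E_{x∼N(0,1)}[φ(x)²] = E_{x∼N(0,1)}[φ'(x)²] = 1) and satisfies E_{x∼N(0,1)}[φ(x)] = 0 if and only if φ(x) = x for all x or φ(x) = −x for all x. -/
open MeasureTheory ProbabilityTheory Real Filter Set
open scoped ENNReal NNReal

noncomputable section AuxGPN

/-- The standard Gaussian density. -/
def gw (x : ℝ) : ℝ := (Real.sqrt (2 * π))⁻¹ * Real.exp (-x ^ 2 / 2)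

lemma gw_eq : gw = gaussianPDFReal 0 1 := by
  funext x; simp [gw, gaussianPDFReal, NNReal.coe_one]

lemma gw_pos (x : ℝ) : 0 < gw x :=
  mul_pos (inv_pos.2 (Real.sqrt_pos.2 (by positivity))) (Real.exp_pos _)

lemma gw_cont : Continuous gw := by
  rw [gw_eq, gaussianPDFReal_def]; fun_prop

lemma gw_meas : Measurable gw := gw_cont.measurable

lemma hasDerivAt_gw (x : ℝ) : HasDerivAt gw (-x * gw x) x := by
  have h1 : HasDerivAt (fun x : ℝ => -x ^ 2 / 2) (-x) x := by
    have := ((hasDerivAt_pow 2 x).neg).div_const 2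
    simpa using this.congr_deriv (by ring)
  have h2 := (h1.exp).const_mul (Real.sqrt (2 * π))⁻¹
  have h3 : gw = fun x : ℝ => (Real.sqrt (2 * π))⁻¹ * Real.exp (-x ^ 2 / 2) := rfl
  rw [h3]
  exact h2.congr_deriv (by simp [gw]; ring)

lemma gauss_withDensity :
    gaussianReal 0 1 = volume.withDensity (fun x => ((gw x).toNNReal : ℝ≥0∞)) := by
  rw [gaussianReal_of_var_ne_zero 0 one_ne_zero]
  congr 1
  funext x
  rw [gaussianPDF_def, ← gw_eq]; rfl

lemma integral_gauss_eq (f : ℝ → ℝ) :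
    ∫ x, f x ∂(gaussianReal 0 1) = ∫ x, f x * gw x := by
  rw [gauss_withDensity, integral_withDensity_eq_integral_smul (gw_meas.real_toNNReal) f]
  congr 1
  funext x
  simp [NNReal.smul_def, Real.coe_toNNReal _ (gw_pos x).le, mul_comm]

lemma integrable_gauss_iff (f : ℝ → ℝ) :
    Integrable f (gaussianReal 0 1) ↔ Integrable (fun x => f x * gw x) := by
  rw [gauss_withDensity]
  rw [integrable_withDensity_iff (by exact gw_meas.real_toNNReal.coe_nnreal_ennreal)
    (by simp [ENNReal.coe_lt_top])]
  constructor <;> intro h <;> refine h.congr (Eventually.of_forall fun x => ?_) <;>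
    simp [Real.coe_toNNReal _ (gw_pos x).le]

lemma exp_half_eq (x : ℝ) : Real.exp (-x ^ 2 / 2) = Real.exp (-(2⁻¹ : ℝ) * x ^ 2) := by
  ring_nf

lemma integrable_exp_half : Integrable (fun x : ℝ => Real.exp (-x ^ 2 / 2)) := by
  simp_rw [exp_half_eq]
  exact integrable_exp_neg_mul_sq (by norm_num)

lemma integrable_gw : Integrable gw := integrable_exp_half.const_mul _

lemma integrable_mul_exp_half : Integrable (fun x : ℝ => x * Real.exp (-x ^ 2 / 2)) := by
  simp_rw [exp_half_eq]
  exact integrable_mul_exp_neg_mul_sq (by norm_num)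

lemma integrable_id_gw : Integrable (fun x : ℝ => x * gw x) := by
  have := integrable_mul_exp_half.const_mul ((Real.sqrt (2 * π))⁻¹)
  refine this.congr (Eventually.of_forall fun x => ?_)
  simp [gw]; ring

lemma sq_exp_half_le (x : ℝ) : x ^ 2 * Real.exp (-x ^ 2 / 2) ≤ 4 * Real.exp (-x ^ 2 / 4) := by
  have h1 : x ^ 2 / 4 ≤ Real.exp (x ^ 2 / 4) := by
    have := Real.add_one_le_exp (x ^ 2 / 4)
    nlinarith
  have h2 : Real.exp (-x ^ 2 / 2) = Real.exp (-x ^ 2 / 4) / Real.exp (x ^ 2 / 4) := by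
    rw [← Real.exp_sub]; ring_nf
  rw [h2, div_eq_mul_inv, ← mul_assoc]
  calc x ^ 2 * Real.exp (-x^2/4) * (Real.exp (x^2/4))⁻¹
      ≤ 4 * Real.exp (x^2/4) * Real.exp (-x^2/4) * (Real.exp (x^2/4))⁻¹ := by
        have h3 : x ^ 2 * Real.exp (-x ^ 2 / 4) ≤ 4 * Real.exp (x ^ 2 / 4) * Real.exp (-x ^ 2 / 4) := by
          have := Real.exp_pos (-x ^ 2 / 4)
          nlinarith
        have := Real.exp_pos (x ^ 2 / 4); gcongr
    _ = 4 * Real.exp (-x^2/4) := by field_simp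

lemma integrable_sq_exp_half : Integrable (fun x : ℝ => x ^ 2 * Real.exp (-x ^ 2 / 2)) := by
  have hbound : Integrable (fun x : ℝ => 4 * Real.exp (-(4⁻¹:ℝ) * x ^ 2)) :=
    (integrable_exp_neg_mul_sq (by norm_num)).const_mul 4
  refine hbound.mono' (Continuous.aestronglyMeasurable (by continuity))
    (Eventually.of_forall fun x => ?_)
  rw [Real.norm_eq_abs, abs_of_nonneg (by positivity)]
  calc x ^ 2 * Real.exp (-x ^ 2 / 2) ≤ 4 * Real.exp (-x ^ 2 / 4) := sq_exp_half_le x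
    _ = 4 * Real.exp (-(4⁻¹:ℝ) * x ^ 2) := by ring_nf

lemma integrable_sq_gw : Integrable (fun x : ℝ => x ^ 2 * gw x) := by
  have := integrable_sq_exp_half.const_mul ((Real.sqrt (2 * π))⁻¹)
  refine this.congr (Eventually.of_forall fun x => ?_)
  simp [gw]; ring

lemma integral_gw : ∫ x, gw x = 1 := by
  rw [gw_eq]; exact integral_gaussianPDFReal_eq_one 0 one_ne_zero

lemma integral_id_gw : ∫ x, x * gw x = 0 := by
  have h : ∀ x : ℝ, (-x) * gw (-x) = -(x * gw x) := by
    intro x; unfold gw; ring_nf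
  have := MeasureTheory.integral_neg_eq_self (fun x : ℝ => x * gw x) volume
  simp_rw [h] at this
  rw [integral_neg] at this
  linarith [this]

lemma even_integral_eq {f : ℝ → ℝ} (hf : Integrable f) (he : ∀ x, f (-x) = f x) :
    ∫ x, f x = 2 * ∫ x in Ioi (0:ℝ), f x := by
  have h1 := intervalIntegral.integral_Iic_add_Ioi (b := (0:ℝ)) hf.integrableOn hf.integrableOn
  have h2 : ∫ x in Ioi (0:ℝ), f (-x) = ∫ x in Iic (0:ℝ), f x := by
    simpa using integral_comp_neg_Ioi (c := (0:ℝ)) f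
  simp_rw [he] at h2
  rw [← h1, ← h2]; ring

lemma tendsto_neg_mul_exp_half :
    Tendsto (fun x : ℝ => -x * Real.exp (-x ^ 2 / 2)) atTop (nhds 0) := by
  have h0 : Tendsto (fun x : ℝ => x * Real.exp (-x ^ 2 / 2)) atTop (nhds 0) := by
    have hb := Real.tendsto_pow_mul_exp_neg_atTop_nhds_zero 1
    refine tendsto_of_tendsto_of_tendsto_of_le_of_le' tendsto_const_nhds (by simpa using hb) ?_ ?_
    · filter_upwards [eventually_ge_atTop (0:ℝ)] with x hx
      positivity
    · filter_upwards [eventually_ge_atTop (2:ℝ)] with x hx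
      have h1 : Real.exp (-x ^ 2 / 2) ≤ Real.exp (-x) := by
        apply Real.exp_le_exp.2; nlinarith
      have : x * Real.exp (-x ^ 2 / 2) ≤ x * Real.exp (-x) := by
        apply mul_le_mul_of_nonneg_left h1 (by linarith)
      simpa using this
  have := h0.neg
  simpa using this.congr (fun x => by ring)

lemma integral_Ioi_sq_exp : ∫ x in Ioi (0:ℝ), (x ^ 2 - 1) * Real.exp (-x ^ 2 / 2) = 0 := by
  have hderiv : ∀ x ∈ Ici (0:ℝ), HasDerivAt (fun x : ℝ => -x * Real.exp (-x ^ 2 / 2))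
      ((x ^ 2 - 1) * Real.exp (-x ^ 2 / 2)) x := by
    intro x _
    have h1 : HasDerivAt (fun x : ℝ => -x ^ 2 / 2) (-x) x := by
      have := ((hasDerivAt_pow 2 x).neg).div_const 2
      simpa using this.congr_deriv (by ring)
    have h2 := (hasDerivAt_neg x).mul h1.exp
    exact h2.congr_deriv (by ring)
  have hint : IntegrableOn (fun x : ℝ => (x ^ 2 - 1) * Real.exp (-x ^ 2 / 2)) (Ioi 0) :=
    ((integrable_sq_exp_half.sub integrable_exp_half).congr
      (Eventually.of_forall fun x => by simp; ring)).integrableOn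
  have := MeasureTheory.integral_Ioi_of_hasDerivAt_of_tendsto' hderiv hint
      tendsto_neg_mul_exp_half
  simpa using this

lemma integral_sq_exp_eq :
    ∫ x : ℝ, x ^ 2 * Real.exp (-x ^ 2 / 2) = ∫ x : ℝ, Real.exp (-x ^ 2 / 2) := by
  have h1 : ∫ x in Ioi (0:ℝ), x ^ 2 * Real.exp (-x ^ 2 / 2)
      = ∫ x in Ioi (0:ℝ), Real.exp (-x ^ 2 / 2) := by
    have := integral_Ioi_sq_exp
    have hs := MeasureTheory.integral_sub (integrable_sq_exp_half.integrableOn (s := Ioi 0))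
      (integrable_exp_half.integrableOn (s := Ioi 0))
    simp_rw [sub_mul, one_mul] at this
    rw [hs] at this
    linarith
  rw [even_integral_eq integrable_sq_exp_half (fun x => by ring_nf),
    even_integral_eq integrable_exp_half (fun x => by ring_nf), h1]

lemma integral_sq_gw : ∫ x, x ^ 2 * gw x = 1 := by
  have h1 : ∀ x : ℝ, x ^ 2 * gw x
      = (Real.sqrt (2 * π))⁻¹ * (x ^ 2 * Real.exp (-x ^ 2 / 2)) := by
    intro x; unfold gw; ring
  have h2 : ∀ x : ℝ, gw x = (Real.sqrt (2 * π))⁻¹ * Real.exp (-x ^ 2 / 2) := fun _ => rfl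
  calc ∫ x, x ^ 2 * gw x
      = ∫ x, (Real.sqrt (2 * π))⁻¹ * (x ^ 2 * Real.exp (-x ^ 2 / 2)) := by simp_rw [h1]
    _ = (Real.sqrt (2 * π))⁻¹ * ∫ x, x ^ 2 * Real.exp (-x ^ 2 / 2) := integral_const_mul _ _
    _ = (Real.sqrt (2 * π))⁻¹ * ∫ x : ℝ, Real.exp (-x ^ 2 / 2) := by rw [integral_sq_exp_eq]
    _ = ∫ x, gw x := by rw [← integral_const_mul]; simp_rw [← h2]
    _ = 1 := integral_gw

section Main

variable (u : ℝ → ℝ)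

-- the key nonnegative integrand
private noncomputable def qq (u : ℝ → ℝ) (x : ℝ) : ℝ := (deriv u x - u x / x) ^ 2 * gw x
private noncomputable def gg (u : ℝ → ℝ) (x : ℝ) : ℝ := deriv u x ^ 2 * gw x - u x ^ 2 * gw x
private noncomputable def FF (u : ℝ → ℝ) (x : ℝ) : ℝ := u x ^ 2 * gw x / x

lemma qq_nonneg (x : ℝ) : 0 ≤ qq u x := mul_nonneg (sq_nonneg _) (gw_pos x).le

lemma qq_meas (hud : Differentiable ℝ u) : Measurable (qq u) := by
  have mdu : Measurable (deriv u) := measurable_deriv u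
  have mu : Measurable u := hud.continuous.measurable
  exact ((mdu.sub (mu.div measurable_id)).pow measurable_const).mul gw_meas

lemma FF_deriv (hud : Differentiable ℝ u) {x : ℝ} (hx : x ≠ 0) : HasDerivAt (FF u) (gg u x - qq u x) x := by
  have hu : HasDerivAt u (deriv u x) x := (hud x).hasDerivAt
  have h_u2 : HasDerivAt (fun y => u y ^ 2) (2 * u x * deriv u x) x := by
    simpa using (hu.fun_pow 2).congr_deriv (by ring)
  have hnum : HasDerivAt (fun y => u y ^ 2 * gw y)
      (2 * u x * deriv u x * gw x + u x ^ 2 * (-x * gw x)) x := h_u2.mul (hasDerivAt_gw x)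
  have hdiv := hnum.div (hasDerivAt_id x) hx
  refine hdiv.congr_deriv ?_
  unfold gg qq
  simp only [id]
  field_simp
  ring

lemma qq_intInt (hud : Differentiable ℝ u) (Id2 : Integrable (fun x => deriv u x ^ 2 * gw x)) {a b : ℝ}
    (hab : (0:ℝ) ∉ uIcc a b) : IntervalIntegrable (qq u) volume a b := by
  have h2d : IntervalIntegrable (fun x => 2 * (deriv u x ^ 2 * gw x)) volume a b :=
    (Id2.intervalIntegrable).const_mul 2
  have hcont : ContinuousOn (fun x => 2 * ((u x / x) ^ 2 * gw x)) (uIcc a b) := by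
    have : ContinuousOn (fun x : ℝ => u x / x) (uIcc a b) :=
      (hud.continuous.continuousOn).div continuousOn_id
        (fun x hx => fun h0 => hab (h0 ▸ hx))
    exact ((this.pow 2).mul gw_cont.continuousOn).const_smul 2 |>.congr (fun x _ => by simp)
  have hB : IntervalIntegrable
      (fun x => 2 * (deriv u x ^ 2 * gw x) + 2 * ((u x / x) ^ 2 * gw x)) volume a b :=
    h2d.add (hcont.intervalIntegrable)
  refine hB.mono_fun' ((qq_meas u hud).aestronglyMeasurable) ?_
  filter_upwards with x
  rw [Real.norm_eq_abs, abs_of_nonneg (qq_nonneg u x)]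
  unfold qq
  have h1 := sq_nonneg (deriv u x + u x / x)
  have h2 := (gw_pos x).le
  nlinarith [sq_nonneg (deriv u x - u x / x), mul_nonneg (sq_nonneg (deriv u x + u x / x)) h2]

lemma key_interval (hud : Differentiable ℝ u) (Ig : Integrable (gg u)) (Id2 : Integrable (fun x => deriv u x ^ 2 * gw x))
    {a b : ℝ} (hab : (0:ℝ) ∉ uIcc a b) :
    ∫ x in a..b, qq u x = (∫ x in a..b, gg u x) - (FF u b - FF u a) := by
  have hd : ∀ x ∈ uIcc a b, HasDerivAt (FF u) (gg u x - qq u x) x :=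
    fun x hx => FF_deriv u hud (fun h0 => hab (h0 ▸ hx))
  have hqi := qq_intInt u hud Id2 hab
  have hgi : IntervalIntegrable (gg u) volume a b := Ig.intervalIntegrable
  have h := intervalIntegral.integral_eq_sub_of_hasDerivAt hd (hgi.sub hqi)
  rw [intervalIntegral.integral_sub hgi hqi] at h
  linarith

end Main

section Seq

private noncomputable def εs (m : ℕ) : ℝ := ((m:ℝ) + 1)⁻¹
private noncomputable def Rs (m : ℕ) : ℝ := (m:ℝ) + 1
private noncomputable def Ks (m : ℕ) : Set ℝ := Ioo (εs m) (Rs m) ∪ Ioo (-(Rs m)) (-(εs m))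

lemma εs_pos (m : ℕ) : 0 < εs m := by unfold εs; positivity
lemma Rs_pos (m : ℕ) : 0 < Rs m := by unfold Rs; positivity
lemma εs_le_Rs (m : ℕ) : εs m ≤ Rs m := by
  unfold εs Rs
  have h1 : (1:ℝ) ≤ (m:ℝ) + 1 := by have : (0:ℝ) ≤ (m:ℝ) := Nat.cast_nonneg m; linarith
  calc ((m:ℝ)+1)⁻¹ ≤ 1 := by
        rw [inv_le_one_iff₀]; right; exact h1
    _ ≤ (m:ℝ)+1 := h1
lemma εs_anti : ∀ {j m : ℕ}, j ≤ m → εs m ≤ εs j := by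
  intro j m h
  unfold εs
  have : ((j:ℝ)+1) ≤ ((m:ℝ)+1) := by
    have : (j:ℝ) ≤ (m:ℝ) := Nat.cast_le.2 h
    linarith
  exact inv_anti₀ (by positivity) this
lemma Rs_mono : ∀ {j m : ℕ}, j ≤ m → Rs j ≤ Rs m := by
  intro j m h
  unfold Rs
  have : (j:ℝ) ≤ (m:ℝ) := Nat.cast_le.2 h
  linarith
lemma Ks_meas (m : ℕ) : MeasurableSet (Ks m) := measurableSet_Ioo.union measurableSet_Ioo
lemma Ks_mono : ∀ {j m : ℕ}, j ≤ m → Ks j ⊆ Ks m := by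
  intro j m h
  exact Set.union_subset_union (Ioo_subset_Ioo (εs_anti h) (Rs_mono h))
    (Ioo_subset_Ioo (neg_le_neg (Rs_mono h)) (neg_le_neg (εs_anti h)))
lemma Ks_mem (x : ℝ) (hx : x ≠ 0) : ∃ j, x ∈ Ks j := by
  obtain ⟨n, hn⟩ := exists_nat_gt (max |x| |x|⁻¹)
  refine ⟨n, ?_⟩
  have hx0 : 0 < |x| := abs_pos.2 hx
  have h1 : |x| < (n:ℝ) + 1 := by
    have := le_max_left |x| |x|⁻¹; linarith
  have h2 : |x|⁻¹ < (n:ℝ) + 1 := by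
    have := le_max_right |x| |x|⁻¹; linarith
  have h3 : ((n:ℝ)+1)⁻¹ < |x| := by
    have := inv_strictAnti₀ (inv_pos.2 hx0) h2
    rwa [inv_inv] at this
  rcases hx.lt_or_gt with hneg | hpos
  · right
    rw [abs_of_neg hneg] at h1 h3
    constructor
    · show -(Rs n) < x; unfold Rs; linarith
    · show x < -(εs n); unfold εs; linarith
  · left
    rw [abs_of_pos hpos] at h1 h3
    exact ⟨h3, by unfold Rs; linarith⟩
lemma zero_not_mem_uIcc_pos {a b : ℝ} (ha : 0 < a) (hb : 0 < b) : (0:ℝ) ∉ uIcc a b := by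
  intro h
  rcases mem_uIcc.1 h with ⟨h1, _⟩ | ⟨h1, _⟩ <;> linarith
lemma zero_not_mem_uIcc_neg {a b : ℝ} (ha : a < 0) (hb : b < 0) : (0:ℝ) ∉ uIcc a b := by
  intro h
  rcases mem_uIcc.1 h with ⟨_, h2⟩ | ⟨_, h2⟩ <;> linarith
lemma tendsto_εs : Tendsto εs atTop (nhds 0) := by
  have h1 : Tendsto (fun m : ℕ => (m:ℝ) + 1) atTop atTop :=
    tendsto_atTop_add_const_right _ 1 tendsto_natCast_atTop_atTop
  exact tendsto_inv_atTop_zero.comp h1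
lemma tendsto_εs' : Tendsto εs atTop (nhdsWithin 0 {x : ℝ | x ≠ 0}) :=
  tendsto_nhdsWithin_of_tendsto_nhds_of_eventually_within _ tendsto_εs
    (Eventually.of_forall fun m => (εs_pos m).ne')
lemma tendsto_neg_εs' : Tendsto (fun m => -(εs m)) atTop (nhdsWithin 0 {x : ℝ | x ≠ 0}) := by
  refine tendsto_nhdsWithin_of_tendsto_nhds_of_eventually_within _ ?_
    (Eventually.of_forall fun m => ?_)
  · simpa using tendsto_εs.neg
  · exact (neg_lt_zero.2 (εs_pos m)).ne

end Seq

lemma main_aux (u : ℝ → ℝ) (hud : Differentiable ℝ u) (hu0 : u 0 = 0)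
    (Iu2 : Integrable (fun x => u x ^ 2 * gw x))
    (Id2 : Integrable (fun x => deriv u x ^ 2 * gw x))
    (hD : (∫ x, gg u x) ≤ 0) :
    (∀ x, u x = deriv u 0 * x) ∧ 0 ≤ ∫ x, gg u x := by
  have mdu : Measurable (deriv u) := measurable_deriv u
  have mu : Measurable u := hud.continuous.measurable
  have mg : Measurable (gg u) :=
    ((mdu.pow measurable_const).mul gw_meas).sub ((mu.pow measurable_const).mul gw_meas)
  have Ig : Integrable (gg u) := Id2.sub Iu2
  -- slope limit
  have hslope : Tendsto (fun x => u x / x) (nhdsWithin 0 {x : ℝ | x ≠ 0}) (nhds (deriv u 0)) := by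
    have h := hasDerivAt_iff_tendsto_slope.1 (hud 0).hasDerivAt
    refine Tendsto.congr (fun x => ?_) h
    simp [slope_fun_def, hu0, div_eq_inv_mul]
  -- boundary terms at ε → 0
  have hFeq : ∀ x : ℝ, FF u x = (u x / x) * (u x * gw x) := fun x => by unfold FF; ring
  have hFbd : ∀ (t : ℕ → ℝ), Tendsto t atTop (nhdsWithin 0 {x : ℝ | x ≠ 0}) →
      Tendsto (fun m => FF u (t m)) atTop (nhds 0) := by
    intro t ht
    have ht0 : Tendsto t atTop (nhds 0) := ht.mono_right nhdsWithin_le_nhds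
    have t1 := hslope.comp ht
    have t2 : Tendsto (fun m => u (t m) * gw (t m)) atTop (nhds (u 0 * gw 0)) :=
      ((hud.continuous.mul gw_cont).tendsto 0).comp ht0
    have := t1.mul t2
    simp only [hu0, zero_mul, mul_zero] at this
    simpa [hFeq] using this
  -- integrability on the K m
  have hIntPos : ∀ m, IntegrableOn (qq u) (Ioo (εs m) (Rs m)) := fun m =>
    ((qq_intInt u hud Id2 (zero_not_mem_uIcc_pos (εs_pos m) (Rs_pos m))).1).mono_set
      Ioo_subset_Ioc_self
  have hIntNeg : ∀ m, IntegrableOn (qq u) (Ioo (-(Rs m)) (-(εs m))) := fun m =>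
    ((qq_intInt u hud Id2 (zero_not_mem_uIcc_neg (neg_lt_zero.2 (Rs_pos m))
      (neg_lt_zero.2 (εs_pos m)))).1).mono_set Ioo_subset_Ioc_self
  have hdisj : ∀ m, Disjoint (Ioo (εs m) (Rs m)) (Ioo (-(Rs m)) (-(εs m))) := by
    intro m
    refine Set.disjoint_left.2 fun x hx1 hx2 => ?_
    have h1 := hx1.1; have h2 := hx2.2
    have h3 := εs_pos m
    linarith
  have hKint : ∀ m, IntegrableOn (qq u) (Ks m) := fun m =>
    (hIntPos m).union (hIntNeg m)
  have hSK : ∀ (f : ℝ → ℝ), Integrable f → ∀ m, ∫ x in Ks m, f x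
      = (∫ x in εs m..Rs m, f x) + ∫ x in -(Rs m)..-(εs m), f x := by
    intro f hf m
    unfold Ks
    rw [setIntegral_union (hdisj m) measurableSet_Ioo hf.integrableOn hf.integrableOn,
      intervalIntegral.integral_of_le (εs_le_Rs m),
      intervalIntegral.integral_of_le (neg_le_neg (εs_le_Rs m)),
      integral_Ioc_eq_integral_Ioo, integral_Ioc_eq_integral_Ioo]
  have hSKq : ∀ m, ∫ x in Ks m, qq u x
      = (∫ x in εs m..Rs m, qq u x) + ∫ x in -(Rs m)..-(εs m), qq u x := by
    intro m
    unfold Ks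
    rw [setIntegral_union (hdisj m) measurableSet_Ioo (hIntPos m) (hIntNeg m),
      intervalIntegral.integral_of_le (εs_le_Rs m),
      intervalIntegral.integral_of_le (neg_le_neg (εs_le_Rs m)),
      integral_Ioc_eq_integral_Ioo, integral_Ioc_eq_integral_Ioo]
  -- the key bound
  have hbound : ∀ m, ∫ x in Ks m, qq u x
      ≤ (∫ x in Ks m, gg u x) + FF u (εs m) - FF u (-(εs m)) := by
    intro m
    have k1 := key_interval u hud Ig Id2 (zero_not_mem_uIcc_pos (εs_pos m) (Rs_pos m))
    have k2 := key_interval u hud Ig Id2 (zero_not_mem_uIcc_neg (neg_lt_zero.2 (Rs_pos m))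
      (neg_lt_zero.2 (εs_pos m)))
    have hFR : 0 ≤ FF u (Rs m) := by
      unfold FF
      exact div_nonneg (mul_nonneg (sq_nonneg _) (gw_pos _).le) (Rs_pos m).le
    have hFnR : FF u (-(Rs m)) ≤ 0 := by
      unfold FF
      exact div_nonpos_iff.2 (Or.inl ⟨mul_nonneg (sq_nonneg _) (gw_pos _).le,
        by linarith [Rs_pos m]⟩)
    rw [hSKq m, hSK (gg u) Ig m]
    rw [k1, k2]
    linarith
  -- dominated convergence for the g-part
  have hgK : Tendsto (fun m => ∫ x in Ks m, gg u x) atTop (nhds (∫ x, gg u x)) := by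
    have heq : ∀ m, ∫ x in Ks m, gg u x = ∫ x, (Ks m).indicator (gg u) x := by
      intro m; rw [integral_indicator (Ks_meas m)]
    simp_rw [heq]
    refine MeasureTheory.tendsto_integral_of_dominated_convergence (fun x => |gg u x|)
      (fun m => (mg.indicator (Ks_meas m)).aestronglyMeasurable) Ig.abs
      (fun m => Eventually.of_forall fun x => ?_) ?_
    · have := norm_indicator_le_norm_self (gg u) x (s := Ks m)
      simpa [Real.norm_eq_abs] using this
    · have hne : ∀ᵐ x : ℝ, x ≠ (0:ℝ) := by
        refine ae_iff.2 ?_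
        have : {a : ℝ | ¬ a ≠ 0} = {0} := by ext y; simp
        rw [this]
        exact measure_singleton 0
      filter_upwards [hne] with x hx
      obtain ⟨j, hj⟩ := Ks_mem x hx
      refine tendsto_const_nhds.congr' ?_
      filter_upwards [eventually_ge_atTop j] with m hm
      rw [indicator_of_mem (Ks_mono hm hj)]
  have hRHS : Tendsto (fun m => (∫ x in Ks m, gg u x) + FF u (εs m) - FF u (-(εs m)))
      atTop (nhds (∫ x, gg u x)) := by
    have := (hgK.add (hFbd εs tendsto_εs')).sub (hFbd _ tendsto_neg_εs')
    simpa using this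
  -- conclude each set-integral of q is ≤ ∫ g, and ≥ 0
  have h0le : ∀ j, 0 ≤ ∫ x in Ks j, qq u x := fun j =>
    setIntegral_nonneg (Ks_meas j) (fun x _ => qq_nonneg u x)
  have hjle : ∀ j, (∫ x in Ks j, qq u x) ≤ ∫ x, gg u x := by
    intro j
    refine ge_of_tendsto hRHS ?_
    filter_upwards [eventually_ge_atTop j] with m hm
    calc (∫ x in Ks j, qq u x) ≤ ∫ x in Ks m, qq u x :=
          setIntegral_mono_set (hKint m) (Eventually.of_forall fun x => qq_nonneg u x)
            ((Ks_mono hm).eventuallyLE)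
      _ ≤ _ := hbound m
  refine ⟨?_, le_trans (h0le 0) (hjle 0)⟩
  -- q vanishes a.e.
  have hqz : ∀ j, ∫ x in Ks j, qq u x = 0 := fun j =>
    le_antisymm (le_trans (hjle j) hD) (h0le j)
  have haeq : ∀ᵐ x : ℝ, ∀ j, x ∈ Ks j → qq u x = 0 := by
    refine ae_all_iff.2 fun j => (ae_restrict_iff' (Ks_meas j)).1 ?_
    exact (setIntegral_eq_zero_iff_of_nonneg_ae
      (Eventually.of_forall fun x => qq_nonneg u x) (hKint j)).1 (hqz j)
  have hderiv_ae : ∀ᵐ x : ℝ, x ≠ 0 → deriv u x = u x / x := by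
    filter_upwards [haeq] with x hx hxne
    obtain ⟨j, hj⟩ := Ks_mem x hxne
    have h0 := hx j hj
    unfold qq at h0
    have h1 : (deriv u x - u x / x) ^ 2 = 0 :=
      (mul_eq_zero.1 h0).resolve_right (gw_pos x).ne'
    have h2 : deriv u x - u x / x = 0 := by
      exact pow_eq_zero_iff (by norm_num) |>.1 h1
    linarith
  -- u x / x is locally constant away from 0
  have hflat : ∀ a b : ℝ, (0:ℝ) ∉ uIcc a b → u b / b = u a / a := by
    intro a b hab
    have hdd : ∀ x ∈ uIcc a b, HasDerivAt (fun y => u y / y) ((deriv u x * x - u x) / x ^ 2) x := by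
      intro x hx
      have hx0 : x ≠ 0 := fun h0 => hab (h0 ▸ hx)
      have := ((hud x).hasDerivAt).div (hasDerivAt_id x) hx0
      exact this.congr_deriv (by simp only [id_eq]; ring)
    have hae' : ∀ᵐ x : ℝ, x ∈ Set.uIoc a b → (deriv u x * x - u x) / x ^ 2 = (0:ℝ) := by
      filter_upwards [hderiv_ae] with x hx hmemI
      have hx0 : x ≠ 0 := fun h0 => hab (h0 ▸ uIoc_subset_uIcc hmemI)
      rw [hx hx0]
      field_simp
      ring
    have hii : IntervalIntegrable (fun x => (deriv u x * x - u x) / x ^ 2) volume a b := by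
      rw [intervalIntegrable_iff]
      refine (integrable_zero _ _ _).congr ?_
      filter_upwards [ae_restrict_of_ae hae', ae_restrict_mem measurableSet_uIoc] with x h1 h2
      exact (h1 h2).symm
    have h := intervalIntegral.integral_eq_sub_of_hasDerivAt hdd hii
    rw [intervalIntegral.integral_congr_ae hae'] at h
    simp only [intervalIntegral.integral_zero] at h
    linarith [h.symm]
  have hposc : ∀ x : ℝ, 0 < x → u x / x = deriv u 0 := by
    intro x hx
    have hval : ∀ y : ℝ, 0 < y → u y / y = u 1 / 1 := fun y hy =>
      hflat 1 y (zero_not_mem_uIcc_pos one_pos hy)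
    have t1 : Tendsto (fun y => u y / y) (nhdsWithin 0 (Ioi (0:ℝ))) (nhds (deriv u 0)) :=
      hslope.mono_left (nhdsWithin_mono _ (fun y hy => ne_of_gt hy))
    have t2 : Tendsto (fun y => u y / y) (nhdsWithin 0 (Ioi (0:ℝ))) (nhds (u 1 / 1)) := by
      refine Tendsto.congr' ?_ tendsto_const_nhds
      filter_upwards [self_mem_nhdsWithin] with y hy
      exact (hval y hy).symm
    have he := tendsto_nhds_unique t2 t1
    rw [hval x hx, he]
  have hnegc : ∀ x : ℝ, x < 0 → u x / x = deriv u 0 := by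
    intro x hx
    have hval : ∀ y : ℝ, y < 0 → u y / y = u (-1) / (-1) := fun y hy =>
      hflat (-1) y (zero_not_mem_uIcc_neg (by norm_num) hy)
    have t1 : Tendsto (fun y => u y / y) (nhdsWithin 0 (Iio (0:ℝ))) (nhds (deriv u 0)) :=
      hslope.mono_left (nhdsWithin_mono _ (fun y hy => ne_of_lt hy))
    have t2 : Tendsto (fun y => u y / y) (nhdsWithin 0 (Iio (0:ℝ))) (nhds (u (-1) / (-1))) := by
      refine Tendsto.congr' ?_ tendsto_const_nhds
      filter_upwards [self_mem_nhdsWithin] with y hy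
      exact (hval y hy).symm
    have he := tendsto_nhds_unique t2 t1
    rw [hval x hx, he]
  intro x
  rcases lt_trichotomy x 0 with hx | hx | hx
  · have h := hnegc x hx
    rw [div_eq_iff (ne_of_lt hx)] at h
    rw [h]
  · rw [hx, hu0, mul_zero]
  · have h := hposc x hx
    rw [div_eq_iff (ne_of_gt hx)] at h
    rw [h]

end AuxGPN

open MeasureTheory ProbabilityTheory

/-- **Proposition 2.** A differentiable function `φ : ℝ → ℝ` is Gaussian–Poincaré
normalized (`E[φ(x)²] = E[φ'(x)²] = 1` under the standard Gaussian measure) and has zero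
Gaussian mean (`E[φ(x)] = 0`) if and only if `φ = id` or `φ = -id`. -/
theorem statement1 (φ : ℝ → ℝ) (hφ : Differentiable ℝ φ) :
    ((∫ x, φ x ^ 2 ∂(gaussianReal 0 1)) = 1 ∧
      (∫ x, deriv φ x ^ 2 ∂(gaussianReal 0 1)) = 1 ∧
      (∫ x, φ x ∂(gaussianReal 0 1)) = 0) ↔
    ((φ = fun x => x) ∨ (φ = fun x => -x)) := by
  constructor
  · rintro ⟨h1, h2, h3⟩
    have mφ : Measurable φ := hφ.continuous.measurable
    have intφ2 : Integrable (fun x => φ x ^ 2) (gaussianReal 0 1) := by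
      by_contra hc; rw [integral_undef hc] at h1; exact zero_ne_one h1
    have intd2 : Integrable (fun x => deriv φ x ^ 2) (gaussianReal 0 1) := by
      by_contra hc; rw [integral_undef hc] at h2; exact zero_ne_one h2
    have intφ : Integrable φ (gaussianReal 0 1) :=
      ((memLp_two_iff_integrable_sq mφ.aestronglyMeasurable).2 intφ2).integrable one_le_two
    have Iφ2 : Integrable (fun x => φ x ^ 2 * gw x) := (integrable_gauss_iff _).1 intφ2
    have Id2 : Integrable (fun x => deriv φ x ^ 2 * gw x) := (integrable_gauss_iff _).1 intd2
    have Iφ1 : Integrable (fun x => φ x * gw x) := (integrable_gauss_iff _).1 intφ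
    have E1 : ∫ x, φ x ^ 2 * gw x = 1 := (integral_gauss_eq _).symm.trans h1
    have E2 : ∫ x, deriv φ x ^ 2 * gw x = 1 := (integral_gauss_eq _).symm.trans h2
    have E3 : ∫ x, φ x * gw x = 0 := (integral_gauss_eq _).symm.trans h3
    set β := φ 0 with hβ
    set u : ℝ → ℝ := fun x => φ x - β with hu
    have hud : Differentiable ℝ u := hφ.sub_const β
    have hu0 : u 0 = 0 := by simp [hu, hβ]
    have hderiv_eq : deriv u = deriv φ := by
      funext x; rw [hu]; exact deriv_sub_const β
    have hueq : (fun x => u x ^ 2 * gw x)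
        = fun x => (φ x ^ 2 * gw x - 2 * β * (φ x * gw x)) + β ^ 2 * gw x := by
      funext x; rw [hu]; ring
    have IB : Integrable (fun x => 2 * β * (φ x * gw x)) := Iφ1.const_mul (2 * β)
    have IC : Integrable (fun x : ℝ => β ^ 2 * gw x) := integrable_gw.const_mul (β ^ 2)
    have IA : Integrable (fun x => φ x ^ 2 * gw x - 2 * β * (φ x * gw x)) := Iφ2.sub IB
    have Iu2 : Integrable (fun x => u x ^ 2 * gw x) := by
      rw [hueq]
      exact IA.add IC
    have Eu2 : ∫ x, u x ^ 2 * gw x = 1 + β ^ 2 := by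
      rw [hueq, integral_add IA IC, integral_sub Iφ2 IB, integral_const_mul, integral_const_mul,
        E1, E3, integral_gw]
      ring
    have Id2u : Integrable (fun x => deriv u x ^ 2 * gw x) := by rw [hderiv_eq]; exact Id2
    have hgg_int : ∫ x, gg u x = -β ^ 2 := by
      calc ∫ x, gg u x = ∫ x, (deriv φ x ^ 2 * gw x - u x ^ 2 * gw x) := by
            unfold gg; rw [hderiv_eq]
        _ = (∫ x, deriv φ x ^ 2 * gw x) - ∫ x, u x ^ 2 * gw x := integral_sub Id2 Iu2
        _ = 1 - (1 + β ^ 2) := by rw [E2, Eu2]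
        _ = -β ^ 2 := by ring
    obtain ⟨hlin, hge⟩ := main_aux u hud hu0 Iu2 Id2u
      (by rw [hgg_int]; nlinarith [sq_nonneg β])
    have hβ0 : β = 0 := by
      rw [hgg_int] at hge
      nlinarith [sq_nonneg β]
    have hφx : ∀ x, φ x = deriv u 0 * x := by
      intro x
      have h : φ x - β = deriv u 0 * x := hlin x
      rw [hβ0] at h
      linarith
    have hc2 : (deriv u 0) ^ 2 = 1 := by
      have h1' := h1
      have heq : (fun x => φ x ^ 2) = fun x => (deriv u 0) ^ 2 * (x ^ 2) := by
        funext x; rw [hφx x]; ring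
      rw [heq, integral_gauss_eq] at h1'
      have heq2 : (fun x : ℝ => (deriv u 0) ^ 2 * x ^ 2 * gw x)
          = fun x : ℝ => (deriv u 0) ^ 2 * (x ^ 2 * gw x) := by funext x; ring
      rw [heq2, integral_const_mul, integral_sq_gw, mul_one] at h1'
      exact h1'
    have hcc : (deriv u 0 - 1) * (deriv u 0 + 1) = 0 := by nlinarith
    rcases mul_eq_zero.1 hcc with hc | hc
    · left
      funext x
      rw [hφx x]
      have : deriv u 0 = 1 := by linarith
      rw [this, one_mul]
    · right
      funext x
      rw [hφx x]
      have : deriv u 0 = -1 := by linarith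
      rw [this]
      ring
  · rintro (rfl | rfl)
    · have hd : deriv (fun x : ℝ => x) = fun _ : ℝ => (1:ℝ) := funext fun x => deriv_id x
      refine ⟨?_, ?_, ?_⟩
      · rw [integral_gauss_eq]; simpa using integral_sq_gw
      · rw [hd]
        simp only [one_pow]
        simp [measure_univ]
      · rw [integral_gauss_eq]; simpa using integral_id_gw
    · have hd : deriv (fun x : ℝ => -x) = fun _ : ℝ => (-1:ℝ) :=
        funext fun x => ((hasDerivAt_id x).neg.deriv)
      refine ⟨?_, ?_, ?_⟩
      · rw [integral_gauss_eq]
        have : ∀ x : ℝ, (-x) ^ 2 * gw x = x ^ 2 * gw x := fun x => by ring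
        simp_rw [this]
        exact integral_sq_gw
      · rw [hd]
        simp only [neg_one_sq]
        simp [measure_univ]
      · rw [integral_gauss_eq]
        have : ∀ x : ℝ, (-x) * gw x = -(x * gw x) := fun x => by ring
        simp_rw [this, integral_neg, integral_id_gw, neg_zero]
end

section
/- Let φ : ℝ → ℝ be differentiable with φ' Lipschitz continuous and E_{x∼N(0,1)}[φ'(x)²] = 1, and fix M > 0. For each d, let z_1, ..., z_d be i.i.d. standard Gaussian random variables and let y = (y_1, ..., y_d) ∈ ℝ^d be a fixed vector with ‖y‖_∞ ≤ M. Then for every ε > 0, P{ (1/d) | Σ_{i=1}^d y_i² φ'(z_i)² − Σ_{i=1}^d y_i² | ≥ ε } → 0 as d → ∞. -/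
open MeasureTheory ProbabilityTheory Filter
section auxGauss
open Real

lemma measurePreserving_eval_pi' {ι : Type*} [Fintype ι] {α : ι → Type*}
    [∀ k, MeasurableSpace (α k)] (μ : ∀ k, Measure (α k)) [∀ k, IsProbabilityMeasure (μ k)]
    (i : ι) : MeasurePreserving (Function.eval i) (Measure.pi μ) (μ i) := by
  classical
  refine ⟨measurable_pi_apply i, ?_⟩
  ext s hs
  rw [Measure.map_apply (measurable_pi_apply i) hs, Set.eval_preimage, Measure.pi_pi,
    Finset.prod_eq_single i]
  · rw [Function.update_self]
  · intro b _ hb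
    rw [Function.update_of_ne hb]
    exact measure_univ
  · simp

lemma indepFun_eval_pi' {ι : Type*} [Fintype ι] {α : Type*} [MeasurableSpace α]
    (μ : Measure α) [IsProbabilityMeasure μ] {i j : ι} (hij : i ≠ j) :
    IndepFun (Function.eval i) (Function.eval j) (Measure.pi fun _ : ι => μ) := by
  classical
  rw [indepFun_iff_measure_inter_preimage_eq_mul]
  intro s t hs ht
  have h1 : Function.eval i ⁻¹' s ∩ Function.eval j ⁻¹' t =
      Set.pi Set.univ (fun k => if k = i then s else if k = j then t else Set.univ) := by
    ext z
    simp only [Set.mem_inter_iff, Set.mem_preimage, Set.mem_pi, Set.mem_univ, true_implies]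
    constructor
    · rintro ⟨h1, h2⟩ k
      split_ifs with hk1 hk2
      · subst hk1; exact h1
      · subst hk2; exact h2
      · trivial
    · intro h
      refine ⟨?_, ?_⟩
      · have := h i; simpa using this
      · have := h j; simp only [if_neg (Ne.symm hij), if_pos rfl] at this; exact this
  rw [h1, Measure.pi_pi,
    (measurePreserving_eval_pi' (fun _ : ι => μ) i).measure_preimage hs.nullMeasurableSet,
    (measurePreserving_eval_pi' (fun _ : ι => μ) j).measure_preimage ht.nullMeasurableSet,
    ← Finset.prod_subset (Finset.subset_univ ({i, j} : Finset ι))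
    (by intro k _ hk
        simp only [Finset.mem_insert, Finset.mem_singleton, not_or] at hk
        simp [hk.1, hk.2]),
    Finset.prod_insert (by simpa using hij), Finset.prod_singleton]
  simp [hij, Ne.symm hij]

lemma integrable_one_add_abs_pow' (n : ℕ) :
    Integrable (fun x : ℝ => (1 + |x|) ^ n) (gaussianReal 0 1) := by
  rw [gaussianReal_of_var_ne_zero 0 one_ne_zero,
    integrable_withDensity_iff (measurable_gaussianPDF 0 1)
      (ae_of_all _ fun x => ENNReal.ofReal_lt_top)]
  have hpdf : ∀ x : ℝ, ((gaussianPDF 0 1 x).toReal) = (√(2 * π))⁻¹ * rexp (-x ^ 2 / 2) := by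
    intro x
    rw [gaussianPDF, ENNReal.toReal_ofReal (gaussianPDFReal_nonneg 0 1 x), gaussianPDFReal]
    norm_num
  have hb : (0:ℝ) < 1/4 := by norm_num
  apply Integrable.mono' ((integrable_exp_neg_mul_sq hb).const_mul
    ((√(2 * π))⁻¹ * rexp ((n:ℝ)^2)))
  · exact ((((continuous_const.add continuous_abs).pow n).measurable).mul
      (measurable_gaussianPDF 0 1).ennreal_toReal).aestronglyMeasurable
  · refine ae_of_all _ fun x => ?_
    rw [hpdf x, Real.norm_eq_abs]
    have h0 : (0:ℝ) ≤ 1 + |x| := by positivity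
    have hsq : (0:ℝ) ≤ (√(2 * π))⁻¹ := by positivity
    have h1 : (1 + |x|) ^ n ≤ rexp ((n:ℝ) * |x|) := by
      calc (1 + |x|) ^ n ≤ rexp |x| ^ n :=
            pow_le_pow_left₀ h0 (by linarith [Real.add_one_le_exp |x|]) n
        _ = rexp ((n:ℝ) * |x|) := (Real.exp_nat_mul _ n).symm
    have h2 : rexp ((n:ℝ) * |x|) * rexp (-x ^ 2 / 2) ≤ rexp ((n:ℝ)^2) * rexp (-(1/4) * x^2) := by
      rw [← Real.exp_add, ← Real.exp_add]
      apply Real.exp_le_exp.2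
      nlinarith [sq_nonneg (|x| / 2 - (n:ℝ)), sq_abs x]
    have habs : |((1 + |x|) ^ n * ((√(2 * π))⁻¹ * rexp (-x ^ 2 / 2)))| =
        (1 + |x|) ^ n * ((√(2 * π))⁻¹ * rexp (-x ^ 2 / 2)) := by
      apply abs_of_nonneg; positivity
    rw [habs]
    calc (1 + |x|) ^ n * ((√(2 * π))⁻¹ * rexp (-x ^ 2 / 2))
        = (√(2 * π))⁻¹ * ((1 + |x|) ^ n * rexp (-x ^ 2 / 2)) := by ring
      _ ≤ (√(2 * π))⁻¹ * (rexp ((n:ℝ) * |x|) * rexp (-x ^ 2 / 2)) := by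
          apply mul_le_mul_of_nonneg_left _ hsq
          exact mul_le_mul_of_nonneg_right h1 (Real.exp_pos _).le
      _ ≤ (√(2 * π))⁻¹ * (rexp ((n:ℝ)^2) * rexp (-(1/4) * x^2)) :=
          mul_le_mul_of_nonneg_left h2 hsq
      _ = (√(2 * π))⁻¹ * rexp ((n:ℝ)^2) * rexp (-(1/4) * x^2) := by ring

end auxGauss

/-- Weighted weak law for squares of Lipschitz images of Gaussians: let `φ : ℝ → ℝ` be
differentiable with `φ'` Lipschitz and `E_{x∼N(0,1)}[φ'(x)²] = 1`, and fix `M > 0`.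
For each `d`, let `z₁, ..., z_d` be i.i.d. standard Gaussians (encoded by the product
measure `⨂ᵢ N(0,1)` on `Fin d → ℝ`) and let `y d ∈ ℝ^d` be fixed with `‖y d‖_∞ ≤ M`.
Then for every `ε > 0`,
`P{ (1/d)|∑ᵢ yᵢ² φ'(zᵢ)² − ∑ᵢ yᵢ²| ≥ ε } → 0` as `d → ∞`. -/
theorem statement14 (φ : ℝ → ℝ) (hφ : Differentiable ℝ φ)
    (hLip : ∃ K, LipschitzWith K (deriv φ))
    (hGPN : (∫ x, deriv φ x ^ 2 ∂(gaussianReal 0 1)) = 1)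
    (M : ℝ) (hM : 0 < M)
    (y : ∀ d : ℕ, Fin d → ℝ) (hy : ∀ d i, |y d i| ≤ M) :
    ∀ ε > 0, Tendsto
      (fun d => (Measure.pi fun _ : Fin d => gaussianReal 0 1)
        {z : Fin d → ℝ | ε ≤ (1 / (d : ℝ)) *
          |(∑ i, y d i ^ 2 * deriv φ (z i) ^ 2) - ∑ i, y d i ^ 2|})
      atTop (nhds 0) := by
  obtain ⟨K, hK⟩ := hLip
  intro ε hε
  set ν := gaussianReal 0 1 with hν
  set g : ℝ → ℝ := fun x => deriv φ x ^ 2 with hgdef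
  have hgc : Continuous g := hK.continuous.pow 2
  set C : ℝ := |deriv φ 0| + K with hC
  have hC0 : 0 ≤ C := by positivity
  have hbound : ∀ x : ℝ, |deriv φ x| ≤ C * (1 + |x|) := by
    intro x
    have h0 : |deriv φ x - deriv φ 0| ≤ K * |x| := by
      have := hK.dist_le_mul x 0
      simpa [Real.dist_eq] using this
    have h1 : |deriv φ x| ≤ |deriv φ 0| + K * |x| := by
      have := abs_sub_abs_le_abs_sub (deriv φ x) (deriv φ 0)
      linarith
    have hK0 : (0:ℝ) ≤ K := K.coe_nonneg
    have hx0 : (0:ℝ) ≤ |x| := abs_nonneg x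
    nlinarith [abs_nonneg (deriv φ 0)]
  have hg4 : Integrable (fun x => g x ^ 2) ν := by
    apply Integrable.mono' ((integrable_one_add_abs_pow' 4).const_mul (C^4))
    · exact ((hgc.pow 2).measurable).aestronglyMeasurable
    · refine ae_of_all _ fun x => ?_
      have h1 : |g x ^ 2| = |deriv φ x| ^ 4 := by
        have he : g x ^ 2 = deriv φ x ^ 4 := by simp only [hgdef]; ring
        rw [he, abs_pow]
      rw [Real.norm_eq_abs, h1]
      calc |deriv φ x| ^ 4 ≤ (C * (1 + |x|)) ^ 4 :=
            pow_le_pow_left₀ (abs_nonneg _) (hbound x) 4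
        _ = C ^ 4 * (1 + |x|) ^ 4 := by ring
  have hg2 : MemLp g 2 ν :=
    (memLp_two_iff_integrable_sq hgc.measurable.aestronglyMeasurable).2 hg4
  have hGg : ∫ x, g x ∂ν = 1 := hGPN
  set Vg : ℝ := variance g ν with hVgdef
  have hVg0 : 0 ≤ Vg := variance_nonneg g ν
  -- per-dimension bound
  have key : ∀ d : ℕ, (Measure.pi fun _ : Fin d => ν)
      {z : Fin d → ℝ | ε ≤ (1 / (d : ℝ)) *
        |(∑ i, y d i ^ 2 * deriv φ (z i) ^ 2) - ∑ i, y d i ^ 2|}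
      ≤ ENNReal.ofReal ((M ^ 4 * Vg / ε ^ 2) / d) := by
    intro d
    rcases Nat.eq_zero_or_pos d with hd | hd
    · subst hd
      have : {z : Fin 0 → ℝ | ε ≤ (1 / ((0:ℕ) : ℝ)) *
          |(∑ i, y 0 i ^ 2 * deriv φ (z i) ^ 2) - ∑ i, y 0 i ^ 2|} = ∅ := by
        ext z
        simp only [Set.mem_setOf_eq, Set.mem_empty_iff_false, iff_false, not_le,
          Nat.cast_zero, div_zero, zero_mul]
        linarith
      rw [this]
      simp
    have hdpos : (0:ℝ) < d := Nat.cast_pos.mpr hd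
    set μd := (Measure.pi fun _ : Fin d => ν) with hμd
    haveI : IsProbabilityMeasure μd := by rw [hμd]; infer_instance
    have hmp : ∀ i : Fin d, MeasurePreserving (Function.eval i) μd ν :=
      fun i => measurePreserving_eval_pi' (fun _ => ν) i
    have htrans : ∀ (f : ℝ → ℝ), Continuous f → ∀ i : Fin d,
        (∫ z, f (z i) ∂μd) = ∫ x, f x ∂ν := by
      intro f hf i
      rw [← (hmp i).map_eq]
      exact (integral_map (measurable_pi_apply i).aemeasurable
        hf.measurable.aestronglyMeasurable).symm
    set X : Fin d → (Fin d → ℝ) → ℝ := fun i => fun z => y d i ^ 2 * g (z i) with hX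
    have hXcomp : ∀ i, X i = (fun t => y d i ^ 2 * g t) ∘ Function.eval i := fun i => rfl
    have hXmem : ∀ i, MemLp (X i) 2 μd := by
      intro i
      rw [hXcomp i]
      exact ((hg2.const_mul (y d i ^ 2)).comp_measurePreserving (hmp i))
    have hint : ∀ i, Integrable (X i) μd := fun i => (hXmem i).integrable one_le_two
    have hintX : ∀ i, (∫ z, X i z ∂μd) = y d i ^ 2 := by
      intro i
      rw [hX]
      simp only []
      rw [integral_const_mul, htrans g hgc i, hGg, mul_one]
    have hvar : ∀ i, variance (X i) μd = (y d i ^ 2) ^ 2 * Vg := by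
      intro i
      have hgemem : MemLp (fun z : Fin d → ℝ => g (z i)) 2 μd :=
        hg2.comp_measurePreserving (hmp i)
      have hcomp : variance (fun z : Fin d → ℝ => g (z i)) μd = Vg := by
        rw [variance_eq_sub hgemem, hVgdef, variance_eq_sub hg2]
        have h1 : (∫ z, ((fun z : Fin d → ℝ => g (z i)) ^ 2) z ∂μd) =
            ∫ x, (g ^ 2) x ∂ν := by
          simp only [Pi.pow_apply]
          exact htrans (fun x => g x ^ 2) (hgc.pow 2) i
        have h2 : (∫ z, g (z i) ∂μd) = ∫ x, g x ∂ν := htrans g hgc i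
        rw [h1, h2]
      have := variance_const_mul (y d i ^ 2) (fun z : Fin d → ℝ => g (z i)) μd
      rw [hX]
      simp only []
      rw [this, hcomp]
    have hpair : Set.Pairwise ↑(Finset.univ : Finset (Fin d))
        (fun i j => IndepFun (X i) (X j) μd) := by
      intro i _ j _ hij
      rw [hXcomp i, hXcomp j]
      exact (indepFun_eval_pi' ν hij).comp
        (hgc.measurable.const_mul _) (hgc.measurable.const_mul _)
    set S : (Fin d → ℝ) → ℝ := ∑ i, X i with hS
    have hSmem : MemLp S 2 μd := memLp_finset_sum' _ fun i _ => hXmem i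
    have hSapp : ∀ z, S z = ∑ i, y d i ^ 2 * g (z i) := by
      intro z
      rw [hS, Finset.sum_apply]
    have hES : (∫ z, S z ∂μd) = ∑ i, y d i ^ 2 := by
      rw [hS]
      have : (∫ z, (∑ i, X i) z ∂μd) = ∫ z, ∑ i, X i z ∂μd := by
        congr 1
        ext z
        rw [Finset.sum_apply]
      rw [this, integral_finset_sum _ fun i _ => hint i]
      exact Finset.sum_congr rfl fun i _ => hintX i
    have hvarS : variance S μd ≤ d * (M ^ 4 * Vg) := by
      rw [hS, IndepFun.variance_sum (fun i _ => hXmem i) hpair]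
      calc (∑ i, variance (X i) μd) = ∑ i : Fin d, (y d i ^ 2) ^ 2 * Vg :=
            Finset.sum_congr rfl fun i _ => hvar i
        _ ≤ ∑ _i : Fin d, M ^ 4 * Vg := by
            apply Finset.sum_le_sum
            intro i _
            apply mul_le_mul_of_nonneg_right _ hVg0
            have h := pow_le_pow_left₀ (abs_nonneg (y d i)) (hy d i) 4
            have h2 : |y d i| ^ 4 = (y d i ^ 2) ^ 2 := by
              rw [show (4:ℕ) = 2 * 2 from rfl, pow_mul, sq_abs]
            linarith
        _ = d * (M ^ 4 * Vg) := by
            rw [Finset.sum_const, Finset.card_univ, Fintype.card_fin, nsmul_eq_mul]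
    have hset : {z : Fin d → ℝ | ε ≤ (1 / (d : ℝ)) *
        |(∑ i, y d i ^ 2 * deriv φ (z i) ^ 2) - ∑ i, y d i ^ 2|}
        = {z : Fin d → ℝ | (d : ℝ) * ε ≤ |S z - ∫ z, S z ∂μd|} := by
      ext z
      simp only [Set.mem_setOf_eq]
      rw [hES, hSapp z]
      have : (∑ i, y d i ^ 2 * deriv φ (z i) ^ 2) = ∑ i, y d i ^ 2 * g (z i) := rfl
      rw [this, one_div, inv_mul_eq_div, le_div_iff₀ hdpos, mul_comm ε]
    have hcheb := meas_ge_le_variance_div_sq (μ := μd) hSmem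
      (mul_pos hdpos hε)
    rw [hset]
    refine le_trans hcheb ?_
    apply ENNReal.ofReal_le_ofReal
    calc variance S μd / ((d:ℝ) * ε) ^ 2
        ≤ ((d:ℝ) * (M ^ 4 * Vg)) / ((d:ℝ) * ε) ^ 2 := by gcongr
      _ = M ^ 4 * Vg / ε ^ 2 / d := by field_simp
  have hub : Tendsto (fun d : ℕ => ENNReal.ofReal ((M ^ 4 * Vg / ε ^ 2) / d)) atTop (nhds 0) := by
    rw [← ENNReal.ofReal_zero]
    exact (ENNReal.continuous_ofReal.tendsto 0).comp
      (tendsto_const_div_atTop_nhds_zero_nat _)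
  exact tendsto_of_tendsto_of_tendsto_of_le_of_le tendsto_const_nhds hub
    (fun d => zero_le) key
end
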